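/- An element of W(o_F) is stable if and only if it equals a unit of W(o_F) times a Teichmüller lift [x̄] for some x̄ ∈ o_F. -/

import Mathlib

open scoped NNReal ENNReal

set_option synthInstance.maxHeartbeats 1000000
set_option maxHeartbeats 1000000

/-- The valuation ring `o_F` of an analytic field `F` (a field complete with respect to a
multiplicative nonarchimedean norm, given by a rank-one valuation). -/
noncomputable abbrev OK (F : Type*) [Field F] [Valued F ℝ≥0] : Subring F :=
  Valued.v.integer

/-- The norm `|x̄_n|'` of the `n`-th Teichmüller coordinate of a Witt vector
`x = Σ pⁿ [x̄_n] ∈ W(o_F)` over a perfect field: since `x̄_n = (x.coeff n)^(p⁻ⁿ)`,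
this is `|x.coeff n|'^(p⁻ⁿ)`. -/
noncomputable def tcNorm (p : ℕ) [Fact p.Prime] (F : Type*) [Field F] [Valued F ℝ≥0]
    (x : WittVector p (OK F)) (n : ℕ) : ℝ≥0 :=
  Valued.v ((x.coeff n : OK F) : F) ^ ((((p : ℝ))⁻¹ ^ n : ℝ))

/-- A Witt vector `x = Σ pⁿ [x̄_n] ∈ W(o_F)` is stable if `|x̄_n|' ≤ |x̄_0|'`
for all `n > 0`. -/
def IsStable (p : ℕ) [Fact p.Prime] (F : Type*) [Field F] [Valued F ℝ≥0]
    (x : WittVector p (OK F)) : Prop :=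
  ∀ n : ℕ, 0 < n → tcNorm p F x n ≤ tcNorm p F x 0

/-- A Witt vector `z = Σ pⁿ [z̄_n] ∈ W(o_F)` is primitive if `|z̄_0|' = p⁻¹` and
`|z̄_1|' = 1`; in terms of Witt coordinates, `|z.coeff 0|' = p⁻¹` and `|z.coeff 1|' = 1`. -/
def IsPrimitive (p : ℕ) [Fact p.Prime] (F : Type*) [Field F] [Valued F ℝ≥0]
    (z : WittVector p (OK F)) : Prop :=
  Valued.v ((z.coeff 0 : OK F) : F) = (p : ℝ≥0)⁻¹ ∧
  Valued.v ((z.coeff 1 : OK F) : F) = 1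

namespace StableAux

open WittVector MvPolynomial

variable (p : ℕ) [hp : Fact p.Prime]

/-- Frobenius-twisted scalar multiplication: coefficients `a ^ p ^ n * x.coeff n`. -/
noncomputable def tmul {R : Type*} [CommRing R] (a : R) (x : WittVector p R) : WittVector p R :=
  WittVector.mk p fun n => a ^ p ^ n * x.coeff n

theorem ghostComponent_tmul {R : Type*} [CommRing R] (a : R) (x : WittVector p R) (n : ℕ) :
    ghostComponent n (tmul p a x) = a ^ p ^ n * ghostComponent n x := by
  rw [ghostComponent_apply, ghostComponent_apply, aeval_wittPolynomial, aeval_wittPolynomial,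
    Finset.mul_sum]
  refine Finset.sum_congr rfl fun i hi => ?_
  rw [Finset.mem_range, Nat.lt_succ_iff] at hi
  have h : (a ^ p ^ i) ^ p ^ (n - i) = a ^ p ^ n := by
    rw [← pow_mul, ← pow_add, Nat.add_sub_cancel' hi]
  simp only [tmul, coeff_mk, mul_pow, h]
  ring

theorem map_tmul {R S : Type*} [CommRing R] [CommRing S] (f : R →+* S) (a : R)
    (x : WittVector p R) : map f (tmul p a x) = tmul p (f a) (map f x) := by
  ext n
  simp [tmul, map_coeff, coeff_mk]

private theorem teichmuller_tmul_aux₁ {R : Type*} (a : MvPolynomial R ℚ)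
    (x : WittVector p (MvPolynomial R ℚ)) :
    WittVector.teichmuller p a * x = tmul p a x := by
  apply (ghostMap.bijective_of_invertible p (MvPolynomial R ℚ)).1
  rw [RingHom.map_mul]
  ext1 n
  simp only [Pi.mul_apply, ghostMap_apply, ghostComponent_tmul, ghostComponent_teichmuller]

private theorem teichmuller_tmul_aux₂ {R : Type*} (a : MvPolynomial R ℤ)
    (x : WittVector p (MvPolynomial R ℤ)) :
    WittVector.teichmuller p a * x = tmul p a x := by
  refine map_injective (MvPolynomial.map (Int.castRingHom ℚ))
    (MvPolynomial.map_injective _ Int.cast_injective) ?_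
  rw [RingHom.map_mul, map_teichmuller, map_tmul, teichmuller_tmul_aux₁]

theorem teichmuller_mul {R : Type*} [CommRing R] (a : R) (x : WittVector p R) :
    WittVector.teichmuller p a * x = tmul p a x := by
  rcases counit_surjective R a with ⟨a, rfl⟩
  rcases map_surjective (counit R) (counit_surjective R) x with ⟨x, rfl⟩
  rw [← map_teichmuller, ← RingHom.map_mul, teichmuller_tmul_aux₂, map_tmul]

theorem teichmuller_mul_coeff {R : Type*} [CommRing R] (a : R) (x : WittVector p R) (n : ℕ) :
    (WittVector.teichmuller p a * x).coeff n = a ^ p ^ n * x.coeff n := by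
  rw [teichmuller_mul, tmul, coeff_mk]

end StableAux

namespace StableAux

variable (p : ℕ) [hp : Fact p.Prime]

theorem exp_mul (n : ℕ) : ((p ^ n : ℕ) : ℝ) * ((p : ℝ)⁻¹ ^ n : ℝ) = 1 := by
  have hp0 : (p : ℝ) ≠ 0 := Nat.cast_ne_zero.mpr hp.out.ne_zero
  push_cast
  rw [← mul_pow, mul_inv_cancel₀ hp0, one_pow]

theorem pow_rpow (v : ℝ≥0) (n : ℕ) : (v ^ (p ^ n : ℕ)) ^ ((p : ℝ)⁻¹ ^ n : ℝ) = v := by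
  rw [← NNReal.rpow_natCast v (p ^ n), ← NNReal.rpow_mul, exp_mul p n, NNReal.rpow_one]

theorem exp_pos (n : ℕ) : (0 : ℝ) < (p : ℝ)⁻¹ ^ n := by
  have : (0 : ℝ) < (p : ℝ) := by exact_mod_cast hp.out.pos
  positivity

variable {F : Type*} [Field F] [Valued F ℝ≥0]

theorem tcNorm_zero (x : WittVector p (OK F)) :
    tcNorm p F x 0 = Valued.v ((x.coeff 0 : OK F) : F) := by
  simp [tcNorm]

theorem tcNorm_le_iff (x : WittVector p (OK F)) (n : ℕ) :
    tcNorm p F x n ≤ tcNorm p F x 0 ↔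
      Valued.v ((x.coeff n : OK F) : F) ≤
        Valued.v ((x.coeff 0 : OK F) : F) ^ (p ^ n : ℕ) := by
  have h := NNReal.rpow_le_rpow_iff (x := Valued.v ((x.coeff n : OK F) : F))
    (y := Valued.v ((x.coeff 0 : OK F) : F) ^ (p ^ n : ℕ)) (exp_pos p n)
  rw [pow_rpow] at h
  rw [tcNorm_zero, tcNorm, ← h]

end StableAux


/-- An element of `W(o_F)` is stable if and only if it is a unit times a Teichmüller
lift. -/
theorem stable_iff_unit_mul_teichmuller (p : ℕ) [Fact p.Prime] (F : Type*) [Field F]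
    [Valued F ℝ≥0] [CompleteSpace F] [ExpChar F p] [PerfectRing F p]
    (x : WittVector p (OK F)) :
    IsStable p F x ↔
      ∃ (u : (WittVector p (OK F))ˣ) (a : OK F),
        x = (u : WittVector p (OK F)) * WittVector.teichmuller p a := by
  have hpp : p.Prime := Fact.out
  haveI : CharP F p := by
    rcases ‹ExpChar F p› with _ | h
    · exact absurd rfl hpp.ne_one
    · assumption
  haveI : CharP (OK F) p := CharP.subring' F p (OK F)
  constructor
  · intro hx
    by_cases h0 : x.coeff 0 = 0
    · refine ⟨1, 0, ?_⟩
      have hz : x = 0 := by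
        refine WittVector.ext fun n => ?_
        rw [WittVector.zero_coeff]
        rcases Nat.eq_zero_or_pos n with rfl | hn
        · exact h0
        · have h00 : ((x.coeff 0 : OK F) : F) = 0 := by rw [h0]; simp
          have hv := (StableAux.tcNorm_le_iff p x n).mp (hx n hn)
          rw [h00, map_zero, zero_pow (pow_ne_zero n hpp.ne_zero), le_zero_iff,
            map_eq_zero] at hv
          exact_mod_cast hv
      simp [hz]
    · -- x.coeff 0 ≠ 0
      set a : OK F := x.coeff 0 with ha
      have haF : ((a : F)) ≠ 0 := fun h => h0 (by exact_mod_cast h)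
      have key : ∀ n : ℕ, Valued.v ((x.coeff n : OK F) : F) ≤ Valued.v (a : F) ^ (p ^ n : ℕ) := by
        intro n
        rcases Nat.eq_zero_or_pos n with rfl | hn
        · simp [← ha]
        · exact (StableAux.tcNorm_le_iff p x n).mp (hx n hn)
      have hmem : ∀ n : ℕ, ((x.coeff n : OK F) : F) / (a : F) ^ (p ^ n) ∈ OK F := by
        intro n
        rw [Valuation.mem_integer_iff, map_div₀, map_pow]
        exact div_le_one_of_le₀ (key n) (by positivity)
      set y : WittVector p (OK F) :=
        WittVector.mk p fun n => ⟨((x.coeff n : OK F) : F) / (a : F) ^ (p ^ n), hmem n⟩ with hy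
      have hy0 : y.coeff 0 = ((1 : (OK F)ˣ) : OK F) := by
        rw [hy, WittVector.coeff_mk]
        ext
        simp [← ha, div_self haF]
      refine ⟨WittVector.mkUnit hy0, a, ?_⟩
      rw [WittVector.coe_mkUnit, mul_comm]
      refine WittVector.ext fun n => Subtype.ext ?_
      rw [StableAux.teichmuller_mul_coeff]
      push_cast [hy, WittVector.coeff_mk]
      rw [mul_comm, div_mul_cancel₀ _ (pow_ne_zero _ haF)]
  · rintro ⟨u, a, rfl⟩
    intro n hn
    rw [StableAux.tcNorm_le_iff]
    have hco : ∀ m, ((u : WittVector p (OK F)) * WittVector.teichmuller p a).coeff m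
        = a ^ p ^ m * (u : WittVector p (OK F)).coeff m := by
      intro m
      rw [mul_comm, StableAux.teichmuller_mul_coeff]
    have hu0 : Valued.v (((u : WittVector p (OK F)).coeff 0 : OK F) : F) = 1 := by
      have h1 : (u : WittVector p (OK F)).coeff 0 * ((u⁻¹ : (WittVector p (OK F))ˣ) :
          WittVector p (OK F)).coeff 0 = 1 := by
        rw [← WittVector.mul_coeff_zero, Units.mul_inv, WittVector.one_coeff_zero]
      have h2 : Valued.v (((u : WittVector p (OK F)).coeff 0 : OK F) : F) *
          Valued.v ((((u⁻¹ : (WittVector p (OK F))ˣ) : WittVector p (OK F)).coeff 0 : OK F) : F)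
          = 1 := by
        rw [← map_mul]
        norm_cast
        rw [h1]
        simp
      have hle1 : Valued.v (((u : WittVector p (OK F)).coeff 0 : OK F) : F) ≤ 1 :=
        ((u : WittVector p (OK F)).coeff 0).2
      have hle2 : Valued.v ((((u⁻¹ : (WittVector p (OK F))ˣ) :
          WittVector p (OK F)).coeff 0 : OK F) : F) ≤ 1 :=
        (((u⁻¹ : (WittVector p (OK F))ˣ) : WittVector p (OK F)).coeff 0).2
      refine le_antisymm hle1 ?_
      calc (1 : ℝ≥0) = _ * _ := h2.symm
        _ ≤ _ * 1 := by gcongr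
        _ = _ := mul_one _
    rw [hco n, hco 0]
    push_cast
    rw [map_mul, map_mul, map_pow, map_pow]
    simp only [pow_zero, pow_one, hu0, mul_one]
    calc Valued.v (a : F) ^ (p ^ n) * Valued.v (((u : WittVector p (OK F)).coeff n : OK F) : F)
        ≤ Valued.v (a : F) ^ (p ^ n) * 1 := by
          gcongr
          exact ((u : WittVector p (OK F)).coeff n).2
      _ = Valued.v (a : F) ^ (p ^ n) := mul_one _
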